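/- Let I ⊆ κ, let 𝔄 be an algebra of subsets of 2^κ all of whose members are determined by coordinates in I, and let Z ⊆ 2^κ be determined by coordinates in κ \ I. Then every strictly positive finitely additive probability measure on 𝔄 extends to a strictly positive finitely additive probability measure on the algebra generated by 𝔄 ∪ {Z}. -/
import Mathlib


open Set

/-- `𝔄` is an algebra of subsets of `X`. -/
def IsAlg {X : Type*} (𝔄 : Set (Set X)) : Prop :=
  ∅ ∈ 𝔄 ∧ (∀ A ∈ 𝔄, Aᶜ ∈ 𝔄) ∧ ∀ A ∈ 𝔄, ∀ B ∈ 𝔄, A ∪ B ∈ 𝔄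

/-- `μ` is a finitely additive probability measure on the algebra `𝔄`. -/
def IsFAProb {X : Type*} (𝔄 : Set (Set X)) (μ : Set X → ℝ) : Prop :=
  μ univ = 1 ∧ (∀ A ∈ 𝔄, 0 ≤ μ A) ∧
    ∀ A ∈ 𝔄, ∀ B ∈ 𝔄, Disjoint A B → μ (A ∪ B) = μ A + μ B

/-- `μ` is strictly positive on `𝔄`. -/
def StrictlyPos {X : Type*} (𝔄 : Set (Set X)) (μ : Set X → ℝ) : Prop :=
  ∀ A ∈ 𝔄, A.Nonempty → 0 < μ A

/-- A set `A ⊆ 2^κ` is determined by coordinates in `I`. -/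
def DetBy {κ : Type*} (I : Set κ) (A : Set (κ → Bool)) : Prop :=
  ∀ x ∈ A, ∀ y : κ → Bool, (∀ i ∈ I, y i = x i) → y ∈ A

/-- The algebra of sets generated by the family `S`. -/
inductive GenAlg {X : Type*} (S : Set (Set X)) : Set X → Prop
  | basic : ∀ A ∈ S, GenAlg S A
  | empty : GenAlg S ∅
  | compl : ∀ A, GenAlg S A → GenAlg S Aᶜ
  | union : ∀ A B, GenAlg S A → GenAlg S B → GenAlg S (A ∪ B)

/-- If all members of `𝔄` are determined by coordinates in `I` and `Z` is determined
by coordinates in `κ \ I`, then every strictly positive finitely additive probability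
measure on `𝔄` extends to a strictly positive one on the algebra generated by
`𝔄 ∪ {Z}`. -/
lemma alg_univ {X : Type*} {𝔄 : Set (Set X)} (h : IsAlg 𝔄) : univ ∈ 𝔄 := by
  have := h.2.1 ∅ h.1; simpa using this

lemma alg_inter {X : Type*} {𝔄 : Set (Set X)} (h : IsAlg 𝔄) {A B : Set X}
    (hA : A ∈ 𝔄) (hB : B ∈ 𝔄) : A ∩ B ∈ 𝔄 := by
  have : A ∩ B = (Aᶜ ∪ Bᶜ)ᶜ := by simp [compl_union]
  rw [this]
  exact h.2.1 _ (h.2.2 _ (h.2.1 _ hA) _ (h.2.1 _ hB))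

lemma detby_compl {κ : Type*} {I : Set κ} {Z : Set (κ → Bool)} (h : DetBy I Z) :
    DetBy I Zᶜ := by
  intro x hx y hy hyZ
  exact hx (h y hyZ x fun i hi => (hy i hi).symm)

lemma key_nonempty {κ : Type*} {I : Set κ} {A Z : Set (κ → Bool)}
    (hA : DetBy I A) (hZ : DetBy Iᶜ Z) (hAne : A.Nonempty) (hZne : Z.Nonempty) :
    (A ∩ Z).Nonempty := by
  classical
  obtain ⟨x, hx⟩ := hAne
  obtain ⟨z, hz⟩ := hZne
  refine ⟨fun i => if i ∈ I then x i else z i, ?_, ?_⟩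
  · exact hA x hx _ fun i hi => if_pos hi
  · exact hZ z hz _ fun i hi => if_neg hi

open Classical in
noncomputable def extMeas {X : Type*} (𝔄 : Set (Set X)) (Z : Set X) (μ : Set X → ℝ)
    (C : Set X) : ℝ :=
  if h : ∃ A, A ∈ 𝔄 ∧ ∃ B, B ∈ 𝔄 ∧ C = (A ∩ Z) ∪ (B ∩ Zᶜ)
  then (μ h.choose + μ h.choose_spec.2.choose) / 2 else 0

lemma extMeas_spec {X : Type*} {𝔄 : Set (Set X)} {Z : Set X} {μ : Set X → ℝ}
    (huniq : ∀ A A' B B' : Set X, A ∈ 𝔄 → A' ∈ 𝔄 → B ∈ 𝔄 → B' ∈ 𝔄 →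
      (A ∩ Z) ∪ (B ∩ Zᶜ) = (A' ∩ Z) ∪ (B' ∩ Zᶜ) → A = A' ∧ B = B')
    {A B : Set X} (hA : A ∈ 𝔄) (hB : B ∈ 𝔄) :
    extMeas 𝔄 Z μ ((A ∩ Z) ∪ (B ∩ Zᶜ)) = (μ A + μ B) / 2 := by
  have h : ∃ A', A' ∈ 𝔄 ∧ ∃ B', B' ∈ 𝔄 ∧
      (A ∩ Z) ∪ (B ∩ Zᶜ) = (A' ∩ Z) ∪ (B' ∩ Zᶜ) := ⟨A, hA, B, hB, rfl⟩
  rw [extMeas, dif_pos h]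
  obtain ⟨h1, h2⟩ := huniq h.choose A h.choose_spec.2.choose B
    h.choose_spec.1 hA h.choose_spec.2.choose_spec.1 hB
    h.choose_spec.2.choose_spec.2.symm
  rw [h2, h1]

theorem stmt_7 {κ : Type*} (I : Set κ) (𝔄 : Set (Set (κ → Bool))) (h𝔄 : IsAlg 𝔄)
    (hdet : ∀ A ∈ 𝔄, DetBy I A) (Z : Set (κ → Bool)) (hZ : DetBy Iᶜ Z)
    (μ : Set (κ → Bool) → ℝ) (hμ : IsFAProb 𝔄 μ) (hsp : StrictlyPos 𝔄 μ) :
    ∃ ν : Set (κ → Bool) → ℝ, (∀ A ∈ 𝔄, ν A = μ A) ∧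
      IsFAProb {C | GenAlg (𝔄 ∪ {Z}) C} ν ∧
      StrictlyPos {C | GenAlg (𝔄 ∪ {Z}) C} ν := by
  by_cases hdeg : Z = ∅ ∨ Z = univ
  · -- degenerate case: Z ∈ 𝔄, so the generated algebra is contained in 𝔄
    have hZ𝔄 : Z ∈ 𝔄 := by
      rcases hdeg with h | h <;> rw [h]
      · exact h𝔄.1
      · exact alg_univ h𝔄
    have mem𝔄 : ∀ C, GenAlg (𝔄 ∪ {Z}) C → C ∈ 𝔄 := by
      intro C hC
      induction hC with
      | basic A hA => rcases hA with hA | hA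
                      · exact hA
                      · simp only [mem_singleton_iff] at hA; rw [hA]; exact hZ𝔄
      | empty => exact h𝔄.1
      | compl A _ ih => exact h𝔄.2.1 A ih
      | union A B _ _ ihA ihB => exact h𝔄.2.2 A ihA B ihB
    exact ⟨μ, fun A _ => rfl,
      ⟨hμ.1, fun A hA => hμ.2.1 A (mem𝔄 A hA),
        fun A hA B hB hd => hμ.2.2 A (mem𝔄 A hA) B (mem𝔄 B hB) hd⟩,
      fun A hA hne => hsp A (mem𝔄 A hA) hne⟩
  · push_neg at hdeg
    have hZne : Z.Nonempty := hdeg.1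
    have hZcne : Zᶜ.Nonempty := nonempty_compl.mpr hdeg.2
    have hinterZ : ∀ A ∈ 𝔄, A.Nonempty → (A ∩ Z).Nonempty :=
      fun A hA h => key_nonempty (hdet A hA) hZ h hZne
    have hinterZc : ∀ A ∈ 𝔄, A.Nonempty → (A ∩ Zᶜ).Nonempty :=
      fun A hA h => key_nonempty (hdet A hA) (detby_compl hZ) h hZcne
    have cancel : ∀ (W : Set (κ → Bool)), (∀ A ∈ 𝔄, A.Nonempty → (A ∩ W).Nonempty) →
        ∀ A A' : Set (κ → Bool), A ∈ 𝔄 → A' ∈ 𝔄 → A ∩ W = A' ∩ W → A = A' := by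
      intro W hW A A' hA hA' hEq
      have sub : ∀ {B B' : Set (κ → Bool)}, B ∈ 𝔄 → B' ∈ 𝔄 → B ∩ W = B' ∩ W → B ⊆ B' := by
        intro B B' hB hB' hE x hx
        by_contra hx'
        have hmem : B ∩ B'ᶜ ∈ 𝔄 := alg_inter h𝔄 hB (h𝔄.2.1 _ hB')
        obtain ⟨y, ⟨hyB, hyB'⟩, hyW⟩ := hW _ hmem ⟨x, hx, hx'⟩
        exact hyB' (hE ▸ (⟨hyB, hyW⟩ : y ∈ B ∩ W) : y ∈ B' ∩ W).1
      exact subset_antisymm (sub hA hA' hEq) (sub hA' hA hEq.symm)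
    have huniq : ∀ A A' B B' : Set (κ → Bool), A ∈ 𝔄 → A' ∈ 𝔄 → B ∈ 𝔄 → B' ∈ 𝔄 →
        (A ∩ Z) ∪ (B ∩ Zᶜ) = (A' ∩ Z) ∪ (B' ∩ Zᶜ) → A = A' ∧ B = B' := by
      intro A A' B B' hA hA' hB hB' hEq
      have eZ : ∀ (P Q : Set (κ → Bool)), ((P ∩ Z) ∪ (Q ∩ Zᶜ)) ∩ Z = P ∩ Z := by
        intro P Q; ext x; by_cases hx : x ∈ Z <;> simp [hx]
      have eZc : ∀ (P Q : Set (κ → Bool)), ((P ∩ Z) ∪ (Q ∩ Zᶜ)) ∩ Zᶜ = Q ∩ Zᶜ := by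
        intro P Q; ext x; by_cases hx : x ∈ Z <;> simp [hx]
      constructor
      · exact cancel Z hinterZ A A' hA hA' (by rw [← eZ A B, hEq, eZ])
      · exact cancel Zᶜ hinterZc B B' hB hB' (by rw [← eZc A B, hEq, eZc])
    have hrep : ∀ C, GenAlg (𝔄 ∪ {Z}) C →
        ∃ A, A ∈ 𝔄 ∧ ∃ B, B ∈ 𝔄 ∧ C = (A ∩ Z) ∪ (B ∩ Zᶜ) := by
      intro C hC
      induction hC with
      | basic A hA =>
        rcases hA with hA | hA
        · exact ⟨A, hA, A, hA, (inter_union_compl A Z).symm⟩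
        · simp only [mem_singleton_iff] at hA
          exact ⟨univ, alg_univ h𝔄, ∅, h𝔄.1, by rw [hA]; simp⟩
      | empty => exact ⟨∅, h𝔄.1, ∅, h𝔄.1, by simp⟩
      | compl A _ ih =>
        obtain ⟨A₁, h1, B₁, h2, rfl⟩ := ih
        refine ⟨A₁ᶜ, h𝔄.2.1 _ h1, B₁ᶜ, h𝔄.2.1 _ h2, ?_⟩
        ext x; by_cases hx : x ∈ Z <;> simp [hx]
      | union A B _ _ ihA ihB =>
        obtain ⟨A₁, h1, B₁, h2, rfl⟩ := ihA
        obtain ⟨A₂, h3, B₂, h4, rfl⟩ := ihB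
        refine ⟨A₁ ∪ A₂, h𝔄.2.2 _ h1 _ h3, B₁ ∪ B₂, h𝔄.2.2 _ h2 _ h4, ?_⟩
        ext x; by_cases hx : x ∈ Z <;> simp [hx]
    set ν := extMeas 𝔄 Z μ with hνdef
    have hν : ∀ A B : Set (κ → Bool), A ∈ 𝔄 → B ∈ 𝔄 →
        ν ((A ∩ Z) ∪ (B ∩ Zᶜ)) = (μ A + μ B) / 2 :=
      fun A B hA hB => extMeas_spec huniq hA hB
    have hext : ∀ A ∈ 𝔄, ν A = μ A := by
      intro A hA
      have := hν A A hA hA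
      rw [inter_union_compl] at this
      linarith
    refine ⟨ν, hext, ⟨?_, ?_, ?_⟩, ?_⟩
    · rw [hext univ (alg_univ h𝔄), hμ.1]
    · intro C hC
      obtain ⟨A, hA, B, hB, rfl⟩ := hrep C hC
      rw [hν A B hA hB]
      have := hμ.2.1 A hA
      have := hμ.2.1 B hB
      linarith
    · intro C₁ hC₁ C₂ hC₂ hd
      obtain ⟨A₁, h1, B₁, h2, rfl⟩ := hrep C₁ hC₁
      obtain ⟨A₂, h3, B₂, h4, rfl⟩ := hrep C₂ hC₂
      have hdA : Disjoint A₁ A₂ := by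
        rw [disjoint_iff_inter_eq_empty]
        by_contra hne
        obtain ⟨y, ⟨hy1, hy2⟩, hy3⟩ :=
          hinterZ _ (alg_inter h𝔄 h1 h3) (nonempty_iff_ne_empty.mpr hne)
        exact disjoint_left.mp hd (mem_union_left _ ⟨hy1, hy3⟩) (mem_union_left _ ⟨hy2, hy3⟩)
      have hdB : Disjoint B₁ B₂ := by
        rw [disjoint_iff_inter_eq_empty]
        by_contra hne
        obtain ⟨y, ⟨hy1, hy2⟩, hy3⟩ :=
          hinterZc _ (alg_inter h𝔄 h2 h4) (nonempty_iff_ne_empty.mpr hne)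
        exact disjoint_left.mp hd (mem_union_right _ ⟨hy1, hy3⟩) (mem_union_right _ ⟨hy2, hy3⟩)
      have hU : ((A₁ ∩ Z) ∪ (B₁ ∩ Zᶜ)) ∪ ((A₂ ∩ Z) ∪ (B₂ ∩ Zᶜ)) =
          ((A₁ ∪ A₂) ∩ Z) ∪ ((B₁ ∪ B₂) ∩ Zᶜ) := by
        ext x; by_cases hx : x ∈ Z <;> simp [hx]
      rw [hU, hν _ _ (h𝔄.2.2 _ h1 _ h3) (h𝔄.2.2 _ h2 _ h4), hν _ _ h1 h2, hν _ _ h3 h4,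
        hμ.2.2 _ h1 _ h3 hdA, hμ.2.2 _ h2 _ h4 hdB]
      ring
    · intro C hC hne
      obtain ⟨A, hA, B, hB, rfl⟩ := hrep C hC
      rw [hν A B hA hB]
      have hA0 := hμ.2.1 A hA
      have hB0 := hμ.2.1 B hB
      rcases hne with ⟨x, hx | hx⟩
      · have := hsp A hA ⟨x, hx.1⟩; linarith
      · have := hsp B hB ⟨x, hx.1⟩; linarith
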